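/- arXiv:1603.00520 — 2 statements merged into one kernel-verified Lean document; each statement's English description precedes it below -/
import Mathlib

section
/- Let E be a complete real normed vector space, let A : [0,∞) → E be a continuously differentiable curve, and let W : [0,∞) → ℝ be a differentiable function with W(τ) ≥ 0 and W′(τ) = −‖A′(τ)‖² for all τ ≥ 0. Suppose there is a constant κ > 0 such that W(τ) ≤ κ‖A′(τ)‖² for all τ ≥ 0. Then W(τ) ≤ W(0)·e^{−τ/κ} for all τ ≥ 0, and there exists A∞ ∈ E such that A(τ) → A∞ as τ → ∞ and ‖A(τ) − A∞‖ ≤ (√(W(0))/(1 − e^{−1/(2κ)}))·e^{−τ/(2κ)} for all τ ≥ 0. -/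
open Real Filter Topology

private lemma yma_scalar {c e s u : ℝ} (hc : 0 < c) (he : 0 < e) (hes : e ≤ s)
    (hu : 0 ≤ u) (h : s ^ 2 ≤ c ^ 2 * u ^ 2 + e ^ 2) :
    u ≤ c * u ^ 2 / s + e / c := by
  have hs : 0 < s := lt_of_lt_of_le he hes
  rw [div_add_div _ _ (ne_of_gt hs) (ne_of_gt hc), le_div_iff₀ (by positivity)]
  rcases le_or_gt s (c * u) with h1 | h1
  · nlinarith
  · have h2 : c * u * s ^ 2 ≤ c * u * (c ^ 2 * u ^ 2) + c * u * e ^ 2 := by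
      have := mul_le_mul_of_nonneg_left h (show (0:ℝ) ≤ c * u by positivity)
      nlinarith [this]
    have h3 : c * u * e ^ 2 ≤ s * e ^ 2 :=
      mul_le_mul_of_nonneg_right h1.le (by positivity)
    have h4 : c * u * (c ^ 2 * u ^ 2) ≤ s * (c ^ 2 * u ^ 2) :=
      mul_le_mul_of_nonneg_right h1.le (by positivity)
    nlinarith

private lemma yma_exp_sq {x : ℝ} (hx : 0 ≤ x) : (1 - Real.exp (-x)) ^ 2 ≤ x / 2 := by
  set g : ℝ → ℝ := fun y => y / 2 - (1 - Real.exp (-y)) ^ 2 with hg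
  have hder : ∀ y : ℝ, HasDerivAt g (1 / 2 - 2 * (1 - Real.exp (-y)) * Real.exp (-y)) y := by
    intro y
    have h1 : HasDerivAt (fun y : ℝ => Real.exp (-y)) (-Real.exp (-y)) y := by
      exact ((Real.hasDerivAt_exp (-y)).comp y (hasDerivAt_neg y)).congr_deriv (by ring)
    have h2 : HasDerivAt (fun y : ℝ => 1 - Real.exp (-y)) (Real.exp (-y)) y := by
      exact ((hasDerivAt_const y (1:ℝ)).sub h1).congr_deriv (by ring)
    have h3 : HasDerivAt (fun y : ℝ => (1 - Real.exp (-y)) ^ 2)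
        (2 * (1 - Real.exp (-y)) * Real.exp (-y)) y := by
      have := h2.pow 2
      exact this.congr_deriv (by norm_num)
    have h4 : HasDerivAt (fun y : ℝ => y / 2) (1 / 2) y := by
      simpa using (hasDerivAt_id y).div_const 2
    exact h4.sub h3
  have hmono : MonotoneOn g (Set.Ici (0 : ℝ)) := by
    apply monotoneOn_of_deriv_nonneg (convex_Ici 0)
    · exact fun y _ => ((hder y).continuousAt).continuousWithinAt
    · exact fun y _ => ((hder y).differentiableAt).differentiableWithinAt
    · intro y _
      rw [(hder y).deriv]
      have h5 : Real.exp (-y) * (1 - Real.exp (-y)) ≤ 1 / 4 := by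
        nlinarith [sq_nonneg (Real.exp (-y) - 1 / 2)]
      nlinarith
  have := hmono (Set.self_mem_Ici) (Set.mem_Ici.2 hx) hx
  simp only [hg] at this
  simp at this
  nlinarith [this]

/-- Abstract analytic core of the infinite-time convergence argument for the
Yang–Mills flow: a gradient-type flow `A` whose energy `W` satisfies the energy
identity `W' = -‖A'‖²` and a Poincaré inequality `W ≤ κ‖A'‖²` decays
exponentially and converges at infinite time with an explicit exponential rate. -/
theorem yang_mills_flow_infinite_time_convergence
    {E : Type*} [NormedAddCommGroup E] [NormedSpace ℝ E] [CompleteSpace E]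
    (A A' : ℝ → E) (W : ℝ → ℝ) (κ : ℝ) (hκ : 0 < κ)
    (hA : ∀ τ, 0 ≤ τ → HasDerivAt A (A' τ) τ)
    (hA'cont : ContinuousOn A' (Set.Ici (0 : ℝ)))
    (hW : ∀ τ, 0 ≤ τ → HasDerivAt W (-‖A' τ‖ ^ 2) τ)
    (hWnonneg : ∀ τ, 0 ≤ τ → 0 ≤ W τ)
    (hPI : ∀ τ, 0 ≤ τ → W τ ≤ κ * ‖A' τ‖ ^ 2) :
    (∀ τ, 0 ≤ τ → W τ ≤ W 0 * Real.exp (-(τ / κ))) ∧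
    ∃ Alim : E, Tendsto A atTop (nhds Alim) ∧
      ∀ τ, 0 ≤ τ →
        ‖A τ - Alim‖ ≤ Real.sqrt (W 0) / (1 - Real.exp (-(1 / (2 * κ)))) *
          Real.exp (-(τ / (2 * κ))) := by
  have hκ' : (√κ : ℝ) > 0 := Real.sqrt_pos.2 hκ
  have hκsq : (√κ) ^ 2 = κ := Real.sq_sqrt hκ.le
  -- Part 1: exponential decay of W
  have part1 : ∀ τ, 0 ≤ τ → W τ ≤ W 0 * Real.exp (-(τ / κ)) := by
    intro τ hτ
    set f : ℝ → ℝ := fun t => W t * Real.exp (t / κ) with hf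
    have hfder : ∀ t, 0 ≤ t → HasDerivAt f
        (-‖A' t‖ ^ 2 * Real.exp (t / κ) + W t * (Real.exp (t / κ) / κ)) t := by
      intro t ht
      have hexp : HasDerivAt (fun t : ℝ => Real.exp (t / κ)) (Real.exp (t / κ) / κ) t := by
        have h1 : HasDerivAt (fun t : ℝ => t / κ) (1 / κ) t := by
          simpa using (hasDerivAt_id t).div_const κ
        have := (Real.hasDerivAt_exp (t / κ)).comp t h1
        exact this.congr_deriv (by ring)
      exact (hW t ht).mul hexp
    have hanti : AntitoneOn f (Set.Ici (0 : ℝ)) := by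
      apply antitoneOn_of_deriv_nonpos (convex_Ici 0)
      · exact fun t ht => ((hfder t ht).continuousAt).continuousWithinAt
      · intro t ht
        rw [interior_Ici] at ht
        exact ((hfder t (le_of_lt ht)).differentiableAt).differentiableWithinAt
      · intro t ht
        rw [interior_Ici] at ht
        rw [(hfder t ht.le).deriv]
        have hp := hPI t ht.le
        have he : 0 < Real.exp (t / κ) := Real.exp_pos _
        have : W t * (Real.exp (t / κ) / κ) ≤ ‖A' t‖ ^ 2 * Real.exp (t / κ) := by
          rw [mul_div_assoc']
          rw [div_le_iff₀ hκ]
          calc W t * Real.exp (t / κ) ≤ κ * ‖A' t‖ ^ 2 * Real.exp (t / κ) := by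
                exact mul_le_mul_of_nonneg_right hp he.le
            _ = ‖A' t‖ ^ 2 * Real.exp (t / κ) * κ := by ring
        nlinarith
    have := hanti Set.self_mem_Ici (Set.mem_Ici.2 hτ) hτ
    simp only [hf] at this
    have he : 0 < Real.exp (τ / κ) := Real.exp_pos _
    rw [Real.exp_neg]
    rw [mul_comm (W 0), ← div_eq_inv_mul, le_div_iff₀ he]
    simpa using this
  -- key estimate: for 0 ≤ a ≤ b, ‖A b - A a‖ ≤ 2√κ √(W a)
  have key : ∀ a b : ℝ, 0 ≤ a → a ≤ b → ‖A b - A a‖ ≤ 2 * √κ * √(W a) := by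
    intro a b ha hab
    have heps : ∀ e : ℝ, 0 < e →
        ‖A b - A a‖ ≤ 2 * √κ * √(W a + e ^ 2) + e / √κ * (b - a) := by
      intro e he
      set B : ℝ → ℝ := fun t =>
        2 * √κ * (√(W a + e ^ 2) - √(W t + e ^ 2)) + e / √κ * (t - a) with hB
      have hWpos : ∀ t, 0 ≤ t → 0 < W t + e ^ 2 := fun t ht => by
        have := hWnonneg t ht; positivity
      have hWc : ∀ t, 0 ≤ t → ContinuousAt W t := fun t ht => (hW t ht).continuousAt
      have hfc : ContinuousOn (fun t => A t - A a) (Set.Icc a b) := fun t ht =>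
        (((hA t (ha.trans ht.1)).continuousAt).sub continuousAt_const).continuousWithinAt
      have hfd : ∀ x ∈ Set.Ico a b, HasDerivWithinAt (fun t => A t - A a) (A' x) (Set.Ici x) x :=
        fun t ht => ((hA t (ha.trans ht.1)).hasDerivWithinAt).sub_const _
      have ha0 : ‖(fun t => A t - A a) a‖ ≤ B a := by simp [hB]
      have hBc : ContinuousOn B (Set.Icc a b) := by
        intro t ht
        have h1 : ContinuousAt W t := hWc t (ha.trans ht.1)
        have h2 : ContinuousAt (fun t => √(W t + e ^ 2)) t :=
          Real.continuous_sqrt.continuousAt.comp (h1.add continuousAt_const)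
        have h3 : ContinuousAt B t := by
          rw [hB]
          exact (continuousAt_const.mul (continuousAt_const.sub h2)).add
            (continuousAt_const.mul (continuousAt_id.sub continuousAt_const))
        exact h3.continuousWithinAt
      have hB'der : ∀ x ∈ Set.Ico a b, HasDerivWithinAt B
          (√κ * ‖A' x‖ ^ 2 / √(W x + e ^ 2) + e / √κ) (Set.Ici x) x := by
        intro t ht
        have ht0 : 0 ≤ t := ha.trans ht.1
        have hWd : HasDerivWithinAt (fun t => W t + e ^ 2) (-‖A' t‖ ^ 2) (Set.Ici t) t :=
          ((hW t ht0).hasDerivWithinAt).add_const _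
        have hne : W t + e ^ 2 ≠ 0 := (hWpos t ht0).ne'
        have hsq := hWd.sqrt hne
        have h1 : HasDerivWithinAt (fun t => √(W a + e ^ 2) - √(W t + e ^ 2))
            (‖A' t‖ ^ 2 / (2 * √(W t + e ^ 2))) (Set.Ici t) t := by
          have := (hasDerivWithinAt_const t (Set.Ici t) (√(W a + e ^ 2))).sub hsq
          exact this.congr_deriv (by ring)
        have h2 := (h1.const_mul (2 * √κ)).add
          (((hasDerivWithinAt_id t (Set.Ici t)).sub_const a).const_mul (e / √κ))
        have heq : 2 * √κ * (‖A' t‖ ^ 2 / (2 * √(W t + e ^ 2))) + e / √κ * 1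
            = √κ * ‖A' t‖ ^ 2 / √(W t + e ^ 2) + e / √κ := by
          have hs : √(W t + e ^ 2) > 0 := Real.sqrt_pos.2 (hWpos t ht0)
          field_simp
        rw [heq] at h2
        exact h2
      have hbd : ∀ x ∈ Set.Ico a b, ‖A' x‖ ≤ √κ * ‖A' x‖ ^ 2 / √(W x + e ^ 2) + e / √κ := by
        intro t ht
        have ht0 : 0 ≤ t := ha.trans ht.1
        have hs2 : (√(W t + e ^ 2)) ^ 2 = W t + e ^ 2 := Real.sq_sqrt (hWpos t ht0).le
        have hes : e ≤ √(W t + e ^ 2) := by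
          have h5 : √(e ^ 2) ≤ √(W t + e ^ 2) := Real.sqrt_le_sqrt (by linarith [hWnonneg t ht0])
          rwa [Real.sqrt_sq he.le] at h5
        exact yma_scalar hκ' he hes (norm_nonneg _) (by rw [hs2, hκsq]; linarith [hPI t ht0])
      have main := image_norm_le_of_norm_deriv_right_le_deriv_boundary'
        hfc hfd ha0 hBc hB'der hbd (Set.right_mem_Icc.2 hab)
      simp only [hB] at main
      have hnn : 0 ≤ 2 * √κ * √(W b + e ^ 2) := by positivity
      rw [mul_sub] at main
      linarith
    -- pass to the limit e → 0⁺
    have hlim : Tendsto (fun e : ℝ => 2 * √κ * √(W a + e ^ 2) + e / √κ * (b - a))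
        (nhdsWithin 0 (Set.Ioi 0)) (𝓝 (2 * √κ * √(W a + 0 ^ 2) + 0 / √κ * (b - a))) := by
      apply Tendsto.mono_left _ nhdsWithin_le_nhds
      apply Continuous.tendsto
      fun_prop
    have : ‖A b - A a‖ ≤ 2 * √κ * √(W a + 0 ^ 2) + 0 / √κ * (b - a) := by
      refine ge_of_tendsto hlim ?_
      filter_upwards [self_mem_nhdsWithin] with e he
      exact heps e he
    simpa using this
  -- √W decay
  have sqrtdecay : ∀ τ, 0 ≤ τ → √(W τ) ≤ √(W 0) * Real.exp (-(τ / (2 * κ))) := by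
    intro τ hτ
    have h1 : √(W τ) ≤ √(W 0 * Real.exp (-(τ / κ))) := Real.sqrt_le_sqrt (part1 τ hτ)
    have h2 : Real.exp (-(τ / κ)) = Real.exp (-(τ / (2 * κ))) ^ 2 := by
      rw [← Real.exp_nat_mul]
      congr 1
      push_cast
      field_simp
    rw [h2, Real.sqrt_mul (hWnonneg 0 le_rfl), Real.sqrt_sq (Real.exp_pos _).le] at h1
    exact h1
  have hW0 : 0 ≤ W 0 := hWnonneg 0 le_rfl
  -- Cauchy sequence on naturals
  have hcauchy : CauchySeq (fun n : ℕ => A n) := by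
    apply cauchySeq_of_le_tendsto_0' (fun n : ℕ => 2 * √κ * (√(W 0) * Real.exp (-(n / (2 * κ)))))
    · intro n m hnm
      rw [dist_eq_norm, norm_sub_rev]
      calc ‖A m - A n‖ ≤ 2 * √κ * √(W n) := key n m (Nat.cast_nonneg n) (by exact_mod_cast hnm)
        _ ≤ 2 * √κ * (√(W 0) * Real.exp (-(n / (2 * κ)))) := by
            have := sqrtdecay n (Nat.cast_nonneg n)
            nlinarith [Real.sqrt_nonneg (W (n : ℝ))]
    · have hexp : Tendsto (fun n : ℕ => Real.exp (-(n / (2 * κ)))) atTop (𝓝 0) := by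
        apply Real.tendsto_exp_atBot.comp
        apply Filter.tendsto_neg_atBot_iff.mpr
        exact Tendsto.atTop_div_const (by positivity) tendsto_natCast_atTop_atTop
      have := (hexp.const_mul (2 * √κ * √(W 0)))
      simp only [mul_zero] at this
      simpa [mul_assoc] using this
  obtain ⟨Alim, hAlim⟩ := cauchySeq_tendsto_of_complete hcauchy
  -- bound on ‖A τ - Alim‖ in terms of √(W τ)
  have hbound : ∀ τ, 0 ≤ τ → ‖A τ - Alim‖ ≤ 2 * √κ * √(W τ) := by
    intro τ hτ
    have hlim2 : Tendsto (fun n : ℕ => ‖A τ - A n‖) atTop (𝓝 ‖A τ - Alim‖) :=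
      (tendsto_const_nhds.sub hAlim).norm
    refine le_of_tendsto hlim2 ?_
    rw [eventually_atTop]
    refine ⟨⌈τ⌉₊, fun n hn => ?_⟩
    rw [norm_sub_rev]
    exact key τ n hτ ((Nat.le_ceil τ).trans (by exact_mod_cast hn))
  -- the constant comparison: 2√κ ≤ 1/(1 - exp(-(1/(2κ))))
  have hc1 : (0 : ℝ) < 1 - Real.exp (-(1 / (2 * κ))) := by
    have : Real.exp (-(1 / (2 * κ))) < 1 := Real.exp_lt_one_iff.2 (neg_lt_zero.2 (by positivity))
    linarith
  have hconst : 2 * √κ * (1 - Real.exp (-(1 / (2 * κ)))) ≤ 1 := by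
    have h1 : (1 - Real.exp (-(1 / (2 * κ)))) ^ 2 ≤ 1 / (2 * κ) / 2 :=
      yma_exp_sq (by positivity)
    have h2 : 1 - Real.exp (-(1 / (2 * κ))) ≤ √(1 / (2 * κ) / 2) := by
      rw [show (1 - Real.exp (-(1 / (2 * κ)))) = √((1 - Real.exp (-(1 / (2 * κ)))) ^ 2) by
        rw [Real.sqrt_sq hc1.le]]
      exact Real.sqrt_le_sqrt h1
    have h3 : √κ * √(1 / (2 * κ) / 2) = 1 / 2 := by
      rw [← Real.sqrt_mul hκ.le]
      rw [show κ * (1 / (2 * κ) / 2) = 1 / 4 by field_simp; ring]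
      rw [show (1 / 4 : ℝ) = (1 / 2) ^ 2 by norm_num, Real.sqrt_sq (by norm_num)]
    calc 2 * √κ * (1 - Real.exp (-(1 / (2 * κ)))) ≤ 2 * √κ * √(1 / (2 * κ) / 2) := by
          exact mul_le_mul_of_nonneg_left h2 (by positivity)
      _ = 2 * (√κ * √(1 / (2 * κ) / 2)) := by ring
      _ = 1 := by rw [h3]; norm_num
  have hconst' : 2 * √κ ≤ 1 / (1 - Real.exp (-(1 / (2 * κ)))) :=
    (le_div_iff₀ hc1).2 hconst
  refine ⟨part1, Alim, ?_, ?_⟩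
  · -- convergence of A to Alim at infinity
    rw [tendsto_iff_norm_sub_tendsto_zero]
    apply squeeze_zero' (Filter.Eventually.of_forall fun t => norm_nonneg _)
      (g := fun t => 2 * √κ * √(W 0) * Real.exp (-(t / (2 * κ))))
    · filter_upwards [eventually_ge_atTop (0 : ℝ)] with t ht
      calc ‖A t - Alim‖ ≤ 2 * √κ * √(W t) := hbound t ht
        _ ≤ 2 * √κ * √(W 0) * Real.exp (-(t / (2 * κ))) := by
            have := sqrtdecay t ht
            nlinarith [Real.sqrt_nonneg (W t)]
    · have hexp : Tendsto (fun t : ℝ => Real.exp (-(t / (2 * κ)))) atTop (𝓝 0) := by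
        apply Real.tendsto_exp_atBot.comp
        apply Filter.tendsto_neg_atBot_iff.mpr
        exact Tendsto.atTop_div_const (by positivity) tendsto_id
      have := hexp.const_mul (2 * √κ * √(W 0))
      simpa using this
  · intro τ hτ
    calc ‖A τ - Alim‖ ≤ 2 * √κ * √(W τ) := hbound τ hτ
      _ ≤ 2 * √κ * (√(W 0) * Real.exp (-(τ / (2 * κ)))) := by
          have := sqrtdecay τ hτ
          nlinarith [Real.sqrt_nonneg (W τ)]
      _ ≤ 1 / (1 - Real.exp (-(1 / (2 * κ)))) * (√(W 0) * Real.exp (-(τ / (2 * κ)))) := by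
          apply mul_le_mul_of_nonneg_right hconst'
          positivity
      _ = √(W 0) / (1 - Real.exp (-(1 / (2 * κ)))) * Real.exp (-(τ / (2 * κ))) := by
          ring
end

section
/- Let E be a complete real normed vector space, let T > 0 be finite, let A : [0,T) → E be a continuously differentiable curve, and let W : [0,T) → ℝ be a differentiable function with W(τ) ≥ 0 and W′(τ) = −‖A′(τ)‖² for all τ ∈ [0,T). Then ‖A(τ_b) − A(τₐ)‖² ≤ (τ_b − τₐ)·W(0) for all 0 ≤ τₐ ≤ τ_b < T, and the limit lim_{τ → T⁻} A(τ) exists in E. -/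
open Real Filter MeasureTheory

/-- Cauchy–Schwarz on an interval: `(∫ f)² ≤ (b-a) ∫ f²` for continuous nonneg `f`. -/
lemma interval_cauchy_schwarz_aux (a b : ℝ) (hab : a ≤ b) (f : ℝ → ℝ)
    (hf : ContinuousOn f (Set.Icc a b)) (hfnn : ∀ x, 0 ≤ f x) :
    (∫ x in a..b, f x) ^ 2 ≤ (b - a) * ∫ x in a..b, f x ^ 2 := by
  set μ := volume.restrict (Set.Ioc a b) with hμ
  haveI : IsFiniteMeasure μ := by
    constructor
    rw [hμ, Measure.restrict_apply_univ, Real.volume_Ioc]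
    exact ENNReal.ofReal_lt_top
  have hmeas : AEStronglyMeasurable f μ :=
    (hf.mono Set.Ioc_subset_Icc_self).aestronglyMeasurable measurableSet_Ioc
  obtain ⟨C, hC⟩ := (isCompact_Icc (a := a) (b := b)).exists_bound_of_continuousOn hf
  have hmem : MemLp f (ENNReal.ofReal 2) μ := by
    refine MemLp.of_bound hmeas C ?_
    filter_upwards [ae_restrict_mem measurableSet_Ioc] with x hx
    exact hC x (Set.Ioc_subset_Icc_self hx)
  have hconj : Real.HolderConjugate 2 2 := Real.holderConjugate_iff.mpr ⟨one_lt_two, by norm_num⟩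
  have hmem1 : MemLp (fun _ : ℝ => (1 : ℝ)) (ENNReal.ofReal 2) μ := memLp_const 1
  have hopp := integral_mul_le_Lp_mul_Lq_of_nonneg (μ := μ) hconj
    (Filter.Eventually.of_forall hfnn) (Filter.Eventually.of_forall fun _ => zero_le_one)
    hmem hmem1
  simp only [mul_one, Real.one_rpow] at hopp
  have h1 : ∫ _x, (1 : ℝ) ∂μ = b - a := by
    rw [integral_const, smul_eq_mul, mul_one, hμ, measureReal_def, Measure.restrict_apply_univ,
      Real.volume_Ioc, ENNReal.toReal_ofReal (by linarith)]
  rw [h1] at hopp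
  have hI2 : (0:ℝ) ≤ ∫ x, f x ^ (2:ℝ) ∂μ :=
    integral_nonneg fun x => Real.rpow_nonneg (hfnn x) 2
  have hiv1 : ∫ x in a..b, f x = ∫ x, f x ∂μ := intervalIntegral.integral_of_le hab
  have hiv2 : ∫ x in a..b, f x ^ 2 = ∫ x, f x ^ (2:ℝ) ∂μ := by
    rw [intervalIntegral.integral_of_le hab]
    refine setIntegral_congr_fun measurableSet_Ioc fun x _ => ?_
    rw [← Real.rpow_natCast (f x) 2]; norm_num
  rw [hiv1, hiv2]
  calc (∫ x, f x ∂μ) ^ 2 ≤ ((∫ x, f x ^ (2:ℝ) ∂μ) ^ (1/(2:ℝ)) * (b - a) ^ (1/(2:ℝ))) ^ 2 := by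
        exact pow_le_pow_left₀ (integral_nonneg fun x => hfnn x) hopp 2
    _ = (b - a) * ∫ x, f x ^ (2:ℝ) ∂μ := by
        rw [mul_pow, ← Real.rpow_natCast ((∫ x, f x ^ (2:ℝ) ∂μ) ^ (1/(2:ℝ))) 2,
          ← Real.rpow_natCast ((b-a) ^ (1/(2:ℝ))) 2, ← Real.rpow_mul hI2,
          ← Real.rpow_mul (by linarith : (0:ℝ) ≤ b - a)]
        norm_num [mul_comm]

/-- Convergence at a finite-time singularity: if the gradient-type flow `A`,
defined on a finite time interval `[0, T)` with nonnegative energy `W` satisfying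
the energy identity `W' = -‖A'‖²`, then the displacement satisfies
`‖A(τ_b) - A(τ_a)‖² ≤ (τ_b - τ_a)·W(0)` and the flow converges as `τ → T⁻`. -/
theorem gradient_flow_finite_time_limit
    {E : Type*} [NormedAddCommGroup E] [NormedSpace ℝ E] [CompleteSpace E]
    (T : ℝ) (hT : 0 < T) (A A' : ℝ → E) (W : ℝ → ℝ)
    (hA : ∀ τ, 0 ≤ τ → τ < T → HasDerivAt A (A' τ) τ)
    (hA'cont : ContinuousOn A' (Set.Ico (0 : ℝ) T))
    (hW : ∀ τ, 0 ≤ τ → τ < T → HasDerivAt W (-‖A' τ‖ ^ 2) τ)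
    (hWnonneg : ∀ τ, 0 ≤ τ → τ < T → 0 ≤ W τ) :
    (∀ τa τb : ℝ, 0 ≤ τa → τa ≤ τb → τb < T →
      ‖A τb - A τa‖ ^ 2 ≤ (τb - τa) * W 0) ∧
    ∃ L : E, Tendsto A (nhdsWithin T (Set.Iio T)) (nhds L) := by
  -- energy identity over subintervals
  have energy : ∀ a b : ℝ, 0 ≤ a → a ≤ b → b < T →
      ∫ x in a..b, ‖A' x‖ ^ 2 = W a - W b := by
    intro a b h0 hab hbT
    have hsub : Set.Icc a b ⊆ Set.Ico 0 T := fun x hx =>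
      ⟨le_trans h0 hx.1, lt_of_le_of_lt hx.2 hbT⟩
    have hc : ContinuousOn (fun x => -‖A' x‖ ^ 2) (Set.uIcc a b) := by
      rw [Set.uIcc_of_le hab]
      exact (((hA'cont.mono hsub).norm).pow 2).neg
    have hftc := intervalIntegral.integral_eq_sub_of_hasDerivAt
      (f := W) (f' := fun x => -‖A' x‖ ^ 2)
      (fun x hx => by
        rw [Set.uIcc_of_le hab] at hx
        exact hW x (le_trans h0 hx.1) (lt_of_le_of_lt hx.2 hbT))
      hc.intervalIntegrable
    rw [intervalIntegral.integral_neg] at hftc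
    linarith
  have key : ∀ τa τb : ℝ, 0 ≤ τa → τa ≤ τb → τb < T →
      ‖A τb - A τa‖ ^ 2 ≤ (τb - τa) * W 0 := by
    intro τa τb h0 hab hbT
    have hsub : Set.Icc τa τb ⊆ Set.Ico 0 T := fun x hx =>
      ⟨le_trans h0 hx.1, lt_of_le_of_lt hx.2 hbT⟩
    have hAc : ContinuousOn A' (Set.Icc τa τb) := hA'cont.mono hsub
    have hInt : IntervalIntegrable A' volume τa τb := by
      apply ContinuousOn.intervalIntegrable
      rwa [Set.uIcc_of_le hab]
    have hftc : A τb - A τa = ∫ x in τa..τb, A' x := by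
      refine (intervalIntegral.integral_eq_sub_of_hasDerivAt (fun x hx => ?_) hInt).symm
      rw [Set.uIcc_of_le hab] at hx
      exact hA x (le_trans h0 hx.1) (lt_of_le_of_lt hx.2 hbT)
    have hnorm : ‖A τb - A τa‖ ≤ ∫ x in τa..τb, ‖A' x‖ := by
      rw [hftc]
      exact intervalIntegral.norm_integral_le_integral_norm hab
    have hcs := interval_cauchy_schwarz_aux τa τb hab (fun x => ‖A' x‖) hAc.norm
      (fun x => norm_nonneg _)
    have hE := energy τa τb h0 hab hbT
    have hWa : W τa ≤ W 0 := by
      have hE0 := energy 0 τa le_rfl h0 (lt_of_le_of_lt hab hbT)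
      have hnn : 0 ≤ ∫ x in (0:ℝ)..τa, ‖A' x‖ ^ 2 :=
        intervalIntegral.integral_nonneg h0 fun x _ => by positivity
      linarith
    have hWb : 0 ≤ W τb := hWnonneg τb (le_trans h0 hab) hbT
    calc ‖A τb - A τa‖ ^ 2 ≤ (∫ x in τa..τb, ‖A' x‖) ^ 2 :=
          pow_le_pow_left₀ (norm_nonneg _) hnorm 2
      _ ≤ (τb - τa) * ∫ x in τa..τb, ‖A' x‖ ^ 2 := hcs
      _ = (τb - τa) * (W τa - W τb) := by rw [hE]
      _ ≤ (τb - τa) * W 0 := by nlinarith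
  refine ⟨key, ?_⟩
  have hW0 : 0 ≤ W 0 := hWnonneg 0 le_rfl hT
  haveI : (nhdsWithin T (Set.Iio T)).NeBot := nhdsLT_neBot T
  have hc : Cauchy (Filter.map A (nhdsWithin T (Set.Iio T))) := by
    rw [Metric.cauchy_iff]
    refine ⟨inferInstance, fun ε hε => ?_⟩
    set δ := min T (ε ^ 2 / (W 0 + 1)) with hδdef
    have hδpos : 0 < δ := lt_min hT (div_pos (pow_pos hε 2) (by linarith))
    have hδT : δ ≤ T := min_le_left _ _
    have hδε : δ ≤ ε ^ 2 / (W 0 + 1) := min_le_right _ _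
    refine ⟨A '' Set.Ico (T - δ) T, image_mem_map ?_, ?_⟩
    · exact Ico_mem_nhdsLT_of_mem ⟨by linarith, le_rfl⟩
    · have main : ∀ u v : ℝ, u ∈ Set.Ico (T - δ) T → v ∈ Set.Ico (T - δ) T → u ≤ v →
          dist (A u) (A v) < ε := by
        intro u v hu hv huv
        have h0u : 0 ≤ u := le_trans (by linarith) hu.1
        have hsq : dist (A u) (A v) ^ 2 ≤ (v - u) * W 0 := by
          rw [dist_eq_norm, norm_sub_rev]
          exact key u v h0u huv hv.2
        have hlt : (v - u) * W 0 < ε ^ 2 := by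
          have hvu : v - u ≤ δ := by
            have h1 := hu.1; have h2 := hv.2; linarith
          calc (v - u) * W 0 ≤ δ * W 0 := mul_le_mul_of_nonneg_right hvu hW0
            _ ≤ (ε ^ 2 / (W 0 + 1)) * W 0 := mul_le_mul_of_nonneg_right hδε hW0
            _ < ε ^ 2 := by
                rw [div_mul_eq_mul_div, div_lt_iff₀ (by linarith)]
                nlinarith [pow_pos hε 2]
        exact lt_of_pow_lt_pow_left₀ 2 hε.le (lt_of_le_of_lt hsq hlt)
      rintro x ⟨u, hu, rfl⟩ y ⟨v, hv, rfl⟩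
      rcases le_total u v with h | h
      · exact main u v hu hv h
      · rw [dist_comm]; exact main v u hv hu h
  obtain ⟨L, hL⟩ := CompleteSpace.complete hc
  exact ⟨L, hL⟩
end
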